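/- Let K be a quadratically closed field and let F be the free group on three generators x₁, x₂, x₃. A tuple (t₁, t₂, t₃, t₁₂, t₂₃, t₃₁, t₁₂₃) ∈ K⁷ equals (tr ρ(x₁), tr ρ(x₂), tr ρ(x₃), tr ρ(x₁x₂), tr ρ(x₂x₃), tr ρ(x₃x₁), tr ρ(x₁x₂x₃)) for some representation ρ : F → SL(2,K) if and only if t₁₂₃² + (t₁t₂t₃ − t₁t₂₃ − t₂t₃₁ − t₃t₁₂)·t₁₂₃ + t₁² + t₂² + t₃² + t₁₂² + t₂₃² + t₃₁² + t₁₂t₂₃t₃₁ − t₁t₂t₁₂ − t₂t₃t₂₃ − t₃t₁t₃₁ − 4 = 0. -/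

import Mathlib

/-- `SL(2,K)`: 2×2 matrices of determinant 1. -/
abbrev SL2 (K : Type*) [CommRing K] := Matrix.SpecialLinearGroup (Fin 2) K

/-- A field is quadratically closed if every monic quadratic has a root. -/
def QuadClosed (K : Type*) [Field K] : Prop :=
  ∀ a b : K, ∃ x : K, x ^ 2 + a * x + b = 0

/-- The trace of an element of `SL(2,K)`. -/
def trM {K : Type*} [CommRing K] (A : SL2 K) : K :=
  Matrix.trace (A : Matrix (Fin 2) (Fin 2) K)

/-- `f : G → K` is an `SL(2,K)` character: the trace function of some representation. -/
def IsSL2Character {K : Type*} [CommRing K] {G : Type*} [Group G] (f : G → K) : Prop :=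
  ∃ ρ : G →* SL2 K, ∀ g : G, f g = trM (ρ g)

/-- A subgroup of `SL(2,K)` is reducible if some 1-dimensional subspace (the span of a
nonzero vector `v`) is invariant under all its elements. -/
def IsReducibleSubgroup {K : Type*} [Field K] (H : Subgroup (SL2 K)) : Prop :=
  ∃ v : Fin 2 → K, v ≠ 0 ∧ ∀ A ∈ H, ∃ c : K,
    Matrix.mulVec (A : Matrix (Fin 2) (Fin 2) K) v = c • v

/-- A representation to `SL(2,K)` is reducible if some 1-dimensional subspace is invariant
under the image. -/
def IsReducibleRep {K : Type*} [Field K] {G : Type*} [Group G] (ρ : G →* SL2 K) : Prop :=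
  ∃ v : Fin 2 → K, v ≠ 0 ∧ ∀ g : G, ∃ c : K,
    Matrix.mulVec ((ρ g : SL2 K) : Matrix (Fin 2) (Fin 2) K) v = c • v

private lemma fricke_matrix {K : Type*} [CommRing K] (A B C : Matrix (Fin 2) (Fin 2) K)
    (hA : A 0 0 * A 1 1 - A 0 1 * A 1 0 = 1)
    (hB : B 0 0 * B 1 1 - B 0 1 * B 1 0 = 1)
    (hC : C 0 0 * C 1 1 - C 0 1 * C 1 0 = 1) :
    (A*B*C).trace ^ 2 +
      (A.trace * B.trace * C.trace - A.trace * (B*C).trace - B.trace * (C*A).trace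
        - C.trace * (A*B).trace) * (A*B*C).trace +
      A.trace ^ 2 + B.trace ^ 2 + C.trace ^ 2 + (A*B).trace ^ 2 + (B*C).trace ^ 2
      + (C*A).trace ^ 2 + (A*B).trace * (B*C).trace * (C*A).trace
      - A.trace * B.trace * (A*B).trace - B.trace * C.trace * (B*C).trace
      - C.trace * A.trace * (C*A).trace - 4 = 0 := by
  simp only [Matrix.trace_fin_two, Matrix.mul_apply, Fin.sum_univ_two]
  linear_combination ((B 0 0)^2*(C 0 0)*(C 1 1) + (-1)*(B 0 0)^2 + (-1)*(B 0 0)*(B 0 1)*(C 0 0)*(C 1 0) + (B 0 0)*(B 0 1)*(C 1 0)*(C 1 1) + (-1)*(B 0 0)*(B 1 0)*(C 0 0)*(C 0 1) + (B 0 0)*(B 1 0)*(C 0 1)*(C 1 1) + (B 0 0)*(B 1 1)*(C 0 0)^2 + (-2)*(B 0 0)*(B 1 1)*(C 0 0)*(C 1 1) + (B 0 0)*(B 1 1)*(C 1 1)^2 + (-1)*(B 0 1)^2*(C 1 0)^2 + (B 0 1)*(B 1 1)*(C 0 0)*(C 1 0) + (-1)*(B 0 1)*(B 1 1)*(C 1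 0)*(C 1 1) + (-1)*(B 1 0)^2*(C 0 1)^2 + (B 1 0)*(B 1 1)*(C 0 0)*(C 0 1) + (-1)*(B 1 0)*(B 1 1)*(C 0 1)*(C 1 1) + (B 1 1)^2*(C 0 0)*(C 1 1) + (-1)*(B 1 1)^2 + (-1)*(C 0 0)^2 + (-1)*(C 1 1)^2 + 2) * hA + ((A 0 0)^2*(C 0 0)*(C 1 1) + (-1)*(A 0 0)^2 + (-1)*(A 0 0)*(A 0 1)*(C 0 0)*(C 1 0) + (A 0 0)*(A 0 1)*(C 1 0)*(C 1 1) + (-1)*(A 0 0)*(A 1 0)*(C 0 0)*(C 0 1) + (A 0 0)*(A 1 0)*(C 0 1)*(C 1 1) + (-1)*(A 0 1)^2*(C 1 0)^2 + (A 0 1)*(A 1 0)*(C 0 0)^2 + (-2)*(A 0 1)*(A 1 0)*(C 0 0)*(C 1 1) + (A 0 1)*(A 1 0)*(C 1 1)^2 + (A 0 1)*(A 1 1)*(C 0 0)*(C 1 0) + (-1)*(A 0 1)*(A 1 1)*(C 1 0)*(C 1 1) + (-1)*(A 1 0)^2*(C 0 1)^2 + (A 1 0)*(A 1 1)*(C 0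 0)*(C 0 1) + (-1)*(A 1 0)*(A 1 1)*(C 0 1)*(C 1 1) + (A 1 1)^2*(C 0 0)*(C 1 1) + (-1)*(A 1 1)^2 + (-2)*(C 0 0)*(C 1 1) + 2) * hB + ((A 0 0)^2*(B 0 1)*(B 1 0) + (-1)*(A 0 0)*(A 0 1)*(B 0 0)*(B 1 0) + (A 0 0)*(A 0 1)*(B 1 0)*(B 1 1) + (-1)*(A 0 0)*(A 1 0)*(B 0 0)*(B 0 1) + (A 0 0)*(A 1 0)*(B 0 1)*(B 1 1) + (-1)*(A 0 1)^2*(B 1 0)^2 + (A 0 1)*(A 1 0)*(B 0 0)^2 + (-2)*(A 0 1)*(A 1 0)*(B 0 1)*(B 1 0) + (A 0 1)*(A 1 0)*(B 1 1)^2 + (-2)*(A 0 1)*(A 1 0) + (A 0 1)*(A 1 1)*(B 0 0)*(B 1 0) + (-1)*(A 0 1)*(A 1 1)*(B 1 0)*(B 1 1) + (-1)*(A 1 0)^2*(B 0 1)^2 + (A 1 0)*(A 1 1)*(B 0 0)*(B 0 1) + (-1)*(A 1 0)*(A 1 1)*(B 0 1)*(B 1 1) + (A 1 1)^2*(B 0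 1)*(B 1 0) + (-2)*(B 0 1)*(B 1 0)) * hC

private lemma main_constr {K : Type*} [Field K] (x xi y yi w t123 t3 t23 t31 t12 : K)
    (hxi : x * xi = 1) (hyi : y * yi = 1)
    (hw : ((-1)*t12^2 + t12*x*y + t12*x*yi + t12*xi*y + t12*xi*yi + (-1)*x^2*y*yi + (-1)*x*xi*y^2 + (-1)*x*xi*yi^2 + (-1)*xi^2*y*yi) * w = 1)
    (hrel : t12^2 + (-1)*t12*x*y + (-1)*t12*x*yi + (-1)*t12*xi*y + (-1)*t12*xi*yi + (-1)*t12*t123*t3 + t12*t23*t31 + x^2 + 2*x*xi + x*y*t123*t3 + x*yi*t123*t3 + (-1)*x*t123*t23 + (-1)*x*t3*t31 + xi^2 + xi*y*t123*t3 + xi*yi*t123*t3 + (-1)*xi*t123*t23 + (-1)*xi*t3*t31 + y^2 + 2*y*yi + (-1)*y*t123*t31 + (-1)*y*t3*t23 + yi^2 + (-1)*yi*t123*t31 + (-1)*yi*t3*t23 + t123^2 + t3^2 + t23^2 + t31^2 + (-4) = 0) :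
    ∃ A B C : SL2 K, trM A = x + xi ∧ trM B = y + yi ∧ trM C = t3 ∧
      trM (A*B) = t12 ∧ trM (B*C) = t23 ∧ trM (C*A) = t31 ∧ trM (A*B*C) = t123 := by
  have hdA : Matrix.det !![x, 1; 0, xi] = 1 := by
    rw [Matrix.det_fin_two_of]; linear_combination hxi
  have hdB : Matrix.det !![y, 0; t12 - x*y - xi*yi, yi] = 1 := by
    rw [Matrix.det_fin_two_of]; linear_combination hyi
  have hdC : Matrix.det !![((-1)*t123*t12 + t123*x*y + t123*xi*yi + (-1)*t12*xi*yi*t3 + t12*xi*t23 + t12*yi*t31 + x*xi*y*yi*t3 + (-1)*x*xi*y*t23 + (-1)*x*y*yi*t31 + xi^2*yi^2*t3 + (-1)*xi^2*yi*t23 + (-1)*xi*yi^2*t31) * w, (t123*y + (-1)*t123*yi + t12*yi*t3 + (-1)*t12*t23 + (-1)*x*yi^2*t3 + x*yi*t23 + (-1)*xi*yi^2*t3 + xi*yi*t23 + (-1)*y*yi*t31 + yi^2*t31) * w; (t123*t12*x + (-1)*t123*t12*xi + (-1)*t123*x^2*y + t123*x*xi*y + (-1)*t123*x*xi*yi + t123*xi^2*yi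 + t12^2*xi*t3 + (-1)*t12^2*t31 + (-1)*t12*x*xi*y*t3 + (-1)*t12*x*xi*t23 + t12*x*y*t31 + (-1)*t12*xi^2*y*t3 + (-2)*t12*xi^2*yi*t3 + t12*xi^2*t23 + t12*xi*y*t31 + 2*t12*xi*yi*t31 + x^2*xi*y*t23 + x*xi^2*y^2*t3 + x*xi^2*y*yi*t3 + (-1)*x*xi^2*y*t23 + x*xi^2*yi*t23 + (-1)*x*xi*y^2*t31 + (-1)*x*xi*y*yi*t31 + xi^3*y*yi*t3 + xi^3*yi^2*t3 + (-1)*xi^3*yi*t23 + (-1)*xi^2*y*yi*t31 + (-1)*xi^2*yi^2*t31) * w, (t123*t12 + (-1)*t123*x*y + (-1)*t123*xi*yi + (-1)*t12^2*t3 + t12*x*y*t3 + t12*x*yi*t3 + t12*xi*y*t3 + 2*t12*xi*yi*t3 + (-1)*t12*xi*t23 + (-1)*t12*yi*t31 + (-1)*x^2*y*yi*t3 + (-1)*x*xi*y^2*t3 + (-1)*x*xi*y*yi*t3 + x*xi*y*t23 + (-1)*x*xi*yi^2*t3 + x*y*yi*t31 + (-1)*xi^2*y*yi*t3 + (-1)*xi^2*yi^2*t3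 + xi^2*yi*t23 + xi*yi^2*t31) * w] = 1 := by
    rw [Matrix.det_fin_two_of]
    linear_combination ((-1)*w^2*t12^2*y*yi*t3^2 + w^2*t12^2*y*t3*t23 + w^2*t12^2*yi*t3*t23 + (-1)*w^2*t12^2*t23^2 + w^2*t12*x*y^2*yi*t3^2 + (-1)*w^2*t12*x*y^2*t3*t23 + w^2*t12*x*y*yi^2*t3^2 + (-2)*w^2*t12*x*y*yi*t3*t23 + w^2*t12*x*y*t23^2 + (-1)*w^2*t12*x*yi^2*t3*t23 + w^2*t12*x*yi*t23^2 + w^2*t12*xi*y^2*yi*t3^2 + (-1)*w^2*t12*xi*y^2*t3*t23 + w^2*t12*xi*y*yi^2*t3^2 + (-2)*w^2*t12*xi*y*yi*t3*t23 + w^2*t12*xi*y*t23^2 + (-1)*w^2*t12*xi*yi^2*t3*t23 + w^2*t12*xi*yi*t23^2 + (-2)*w^2*t12*y^2*yi*t3*t31 + (-2)*w^2*t12*y*yi^2*t3*t31 + 2*w^2*t12*y*t3*t31 + 2*w^2*t12*yi*t3*t31 + (-1)*w^2*x^2*y^2*yi^2*t3^2 + w^2*x^2*y^2*yi*t3*t23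 + w^2*x^2*y*yi^2*t3*t23 + (-1)*w^2*x^2*y*yi*t23^2 + (-1)*w^2*x*xi*y^3*yi*t3^2 + w^2*x*xi*y^3*t3*t23 + w^2*x*xi*y^2*yi*t3*t23 + (-1)*w^2*x*xi*y^2*t23^2 + (-1)*w^2*x*xi*y*yi^3*t3^2 + w^2*x*xi*y*yi^2*t3*t23 + w^2*x*xi*yi^3*t3*t23 + (-1)*w^2*x*xi*yi^2*t23^2 + w^2*x*y^3*yi*t3*t31 + w^2*x*y^2*yi^2*t3*t31 + (-1)*w^2*x*y^2*t3*t31 + w^2*x*y*yi^3*t3*t31 + (-1)*w^2*x*y*yi*t3*t31 + (-1)*w^2*x*yi^2*t3*t31 + (-1)*w^2*xi^2*y^2*yi^2*t3^2 + w^2*xi^2*y^2*yi*t3*t23 + w^2*xi^2*y*yi^2*t3*t23 + (-1)*w^2*xi^2*y*yi*t23^2 + w^2*xi*y^3*yi*t3*t31 + w^2*xi*y^2*yi^2*t3*t31 + (-1)*w^2*xi*y^2*t3*t31 + w^2*xi*y*yi^3*t3*t31 + (-1)*w^2*xi*y*yi*t3*t31 + (-1)*w^2*xi*yi^2*t3*t31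 + (-1)*w^2*y^3*yi*t3^2 + (-1)*w^2*y^3*yi*t31^2 + w^2*y^2*t3^2 + w^2*y^2*t31^2 + (-1)*w^2*y*yi^3*t3^2 + (-1)*w^2*y*yi^3*t31^2 + w^2*yi^2*t3^2 + w^2*yi^2*t31^2 + w*y^2 + w*yi^2 + (-2)*w) * hxi + (w^2*t12^2*x*t3*t31 + w^2*t12^2*xi*t3*t31 + (-1)*w^2*t12^2*t3^2 + (-1)*w^2*t12^2*t31^2 + (-1)*w^2*t12*x^2*y*t3*t31 + (-1)*w^2*t12*x^2*yi*t3*t31 + w^2*t12*x*y*t3^2 + w^2*t12*x*y*t31^2 + w^2*t12*x*yi*t3^2 + w^2*t12*x*yi*t31^2 + (-1)*w^2*t12*xi^2*y*t3*t31 + (-1)*w^2*t12*xi^2*yi*t3*t31 + w^2*t12*xi*y*t3^2 + w^2*t12*xi*y*t31^2 + w^2*t12*xi*yi*t3^2 + w^2*t12*xi*yi*t31^2 + (-2)*w^2*t12*y*t3*t31 + (-2)*w^2*t12*yi*t3*t31 + w^2*x^3*y*yi*t3*t31 + (-1)*w^2*x^2*y*yi*t3^2 + (-1)*w^2*x^2*y*yi*t31^2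 + w^2*x*y^2*t3*t31 + w^2*x*y*yi*t3*t31 + w^2*x*yi^2*t3*t31 + w^2*xi^3*y*yi*t3*t31 + (-1)*w^2*xi^2*y*yi*t3^2 + (-1)*w^2*xi^2*y*yi*t31^2 + w^2*xi*y^2*t3*t31 + w^2*xi*y*yi*t3*t31 + w^2*xi*yi^2*t3*t31 + (-1)*w^2*y^2*t3^2 + (-1)*w^2*y^2*t31^2 + (-1)*w^2*yi^2*t3^2 + (-1)*w^2*yi^2*t31^2 + w*x^2 + w*xi^2 + (-2)*w) * hyi + (w*t123^2 + (-1)*w*t123*t12*t3 + w*t123*x*y*t3 + w*t123*x*yi*t3 + (-1)*w*t123*x*t23 + w*t123*xi*y*t3 + w*t123*xi*yi*t3 + (-1)*w*t123*xi*t23 + (-1)*w*t123*y*t31 + (-1)*w*t123*yi*t31 + w*t12*t23*t31 + (-1)*w*x*t3*t31 + (-1)*w*xi*t3*t31 + (-1)*w*y*t3*t23 + (-1)*w*yi*t3*t23 + w*t3^2 + w*t23^2 + w*t31^2 + 1) * hw + (w) * hrel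
  refine ⟨⟨_, hdA⟩, ⟨_, hdB⟩, ⟨_, hdC⟩, ?_, ?_, ?_, ?_, ?_, ?_, ?_⟩
  · simp only [trM, Matrix.SpecialLinearGroup.coe_mul, Matrix.SpecialLinearGroup.coe_mk,
        Matrix.mul_fin_two, Matrix.trace_fin_two_of] <;> ring
  · simp only [trM, Matrix.SpecialLinearGroup.coe_mul, Matrix.SpecialLinearGroup.coe_mk,
        Matrix.mul_fin_two, Matrix.trace_fin_two_of] <;> ring
  · simp only [trM, Matrix.SpecialLinearGroup.coe_mul, Matrix.SpecialLinearGroup.coe_mk,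
        Matrix.mul_fin_two, Matrix.trace_fin_two_of] <;>
      first
      | ring1
      | linear_combination (t3) * hw
  · rw [trM]; erw [Matrix.SpecialLinearGroup.coe_mul]
    simp only [trM, Matrix.SpecialLinearGroup.coe_mul, Matrix.SpecialLinearGroup.coe_mk,
        Matrix.mul_fin_two, Matrix.trace_fin_two_of] <;> ring
  · rw [trM]; erw [Matrix.SpecialLinearGroup.coe_mul]
    simp only [trM, Matrix.SpecialLinearGroup.coe_mul, Matrix.SpecialLinearGroup.coe_mk,
        Matrix.mul_fin_two, Matrix.trace_fin_two_of] <;>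
      first
      | ring1
      | linear_combination (t23) * hw
  · rw [trM]; erw [Matrix.SpecialLinearGroup.coe_mul]
    simp only [trM, Matrix.SpecialLinearGroup.coe_mul, Matrix.SpecialLinearGroup.coe_mk,
        Matrix.mul_fin_two, Matrix.trace_fin_two_of] <;>
      first
      | ring1
      | linear_combination (t31) * hw
  · rw [trM]; erw [Matrix.SpecialLinearGroup.coe_mul, Matrix.SpecialLinearGroup.coe_mul]
    simp only [trM, Matrix.SpecialLinearGroup.coe_mul, Matrix.SpecialLinearGroup.coe_mk,
        Matrix.mul_fin_two, Matrix.trace_fin_two_of] <;>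
      first
      | ring1
      | linear_combination (t123) * hw

private lemma deg_constr {K : Type*} [Field K] (x xi y yi t3 t23 t31 : K)
    (hxi : x * xi = 1) (hyi : y * yi = 1) :
    ∃ A B C : SL2 K, trM A = x + xi ∧ trM B = y + yi ∧ trM C = t3 ∧
      trM (A*B) = x*y + xi*yi ∧ trM (B*C) = t23 ∧ trM (C*A) = t31 ∧
      trM (A*B*C) = x*t23 + yi*t31 - x*yi*t3 := by
  have hdA : Matrix.det !![x, t31 - x*t3; 0, xi] = 1 := by
    rw [Matrix.det_fin_two_of]; linear_combination hxi
  have hdB : Matrix.det !![y, t23 - y*t3; 0, yi] = 1 := by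
    rw [Matrix.det_fin_two_of]; linear_combination hyi
  have hdC : Matrix.det !![t3, -1; 1, 0] = 1 := by
    rw [Matrix.det_fin_two_of]; ring
  refine ⟨⟨_, hdA⟩, ⟨_, hdB⟩, ⟨_, hdC⟩, ?_, ?_, ?_, ?_, ?_, ?_, ?_⟩
  · simp only [trM, Matrix.SpecialLinearGroup.coe_mul, Matrix.SpecialLinearGroup.coe_mk,
        Matrix.mul_fin_two, Matrix.trace_fin_two_of] <;> ring
  · simp only [trM, Matrix.SpecialLinearGroup.coe_mul, Matrix.SpecialLinearGroup.coe_mk,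
        Matrix.mul_fin_two, Matrix.trace_fin_two_of] <;> ring
  · simp only [trM, Matrix.SpecialLinearGroup.coe_mul, Matrix.SpecialLinearGroup.coe_mk,
        Matrix.mul_fin_two, Matrix.trace_fin_two_of] <;> ring
  · rw [trM]; erw [Matrix.SpecialLinearGroup.coe_mul]
    simp only [trM, Matrix.SpecialLinearGroup.coe_mul, Matrix.SpecialLinearGroup.coe_mk,
        Matrix.mul_fin_two, Matrix.trace_fin_two_of] <;> ring
  · rw [trM]; erw [Matrix.SpecialLinearGroup.coe_mul]
    simp only [trM, Matrix.SpecialLinearGroup.coe_mul, Matrix.SpecialLinearGroup.coe_mk,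
        Matrix.mul_fin_two, Matrix.trace_fin_two_of] <;> ring
  · rw [trM]; erw [Matrix.SpecialLinearGroup.coe_mul]
    simp only [trM, Matrix.SpecialLinearGroup.coe_mul, Matrix.SpecialLinearGroup.coe_mk,
        Matrix.mul_fin_two, Matrix.trace_fin_two_of] <;> ring
  · rw [trM]; erw [Matrix.SpecialLinearGroup.coe_mul, Matrix.SpecialLinearGroup.coe_mul]
    simp only [trM, Matrix.SpecialLinearGroup.coe_mul, Matrix.SpecialLinearGroup.coe_mk,
        Matrix.mul_fin_two, Matrix.trace_fin_two_of] <;> ring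

private lemma deg_full {K : Type*} [Field K] (x xi y yi t123 t3 t23 t31 : K)
    (hxi : x * xi = 1) (hyi : y * yi = 1)
    (hrel : (-1)*x^2*y*yi + x^2 + (-1)*x*xi*y^2 + (-1)*x*xi*yi^2 + 2*x*xi + x*y*t23*t31 + x*yi*t123*t3 + (-1)*x*t123*t23 + (-1)*x*t3*t31 + (-1)*xi^2*y*yi + xi^2 + xi*y*t123*t3 + xi*yi*t23*t31 + (-1)*xi*t123*t23 + (-1)*xi*t3*t31 + y^2 + 2*y*yi + (-1)*y*t123*t31 + (-1)*y*t3*t23 + yi^2 + (-1)*yi*t123*t31 + (-1)*yi*t3*t23 + t123^2 + t3^2 + t23^2 + t31^2 + (-4) = 0) :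
    ∃ A B C : SL2 K, trM A = x + xi ∧ trM B = y + yi ∧ trM C = t3 ∧
      trM (A*B) = x*y + xi*yi ∧ trM (B*C) = t23 ∧ trM (C*A) = t31 ∧
      trM (A*B*C) = t123 := by
  have hfac : (t123 - (x*t23 + yi*t31 - x*yi*t3)) * (t123 - (xi*t23 + y*t31 - xi*y*t3)) = 0 := by
    linear_combination (y^2 + y*yi*t3^2 + (-1)*y*t3*t23 + yi^2 + (-1)*yi*t3*t23 + t23^2 + (-2)) * hxi + (x^2 + (-1)*x*t3*t31 + xi^2 + (-1)*xi*t3*t31 + t3^2 + t31^2 + (-2)) * hyi + hrel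
  rcases mul_eq_zero.1 hfac with h | h
  · obtain ⟨A, B, C, h1, h2, h3, h4, h5, h6, h7⟩ := deg_constr x xi y yi t3 t23 t31 hxi hyi
    exact ⟨A, B, C, h1, h2, h3, h4, h5, h6, by rw [h7]; linear_combination -h⟩
  · obtain ⟨A, B, C, h1, h2, h3, h4, h5, h6, h7⟩ := deg_constr xi x yi y t3 t23 t31
      (by linear_combination hxi) (by linear_combination hyi)
    exact ⟨A, B, C, by rw [h1]; ring, by rw [h2]; ring, h3, by rw [h4]; ring, h5, h6,
      by rw [h7]; linear_combination -h⟩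

private lemma glue {K : Type*} [Field K] {t₁ t₂ t₃ t₁₂ t₂₃ t₃₁ t₁₂₃ : K}
    (A B C : SL2 K) (h1 : trM A = t₁) (h2 : trM B = t₂) (h3 : trM C = t₃)
    (h4 : trM (A*B) = t₁₂) (h5 : trM (B*C) = t₂₃) (h6 : trM (C*A) = t₃₁)
    (h7 : trM (A*B*C) = t₁₂₃) :
    ∃ ρ : FreeGroup (Fin 3) →* SL2 K,
        trM (ρ (FreeGroup.of 0)) = t₁ ∧
        trM (ρ (FreeGroup.of 1)) = t₂ ∧
        trM (ρ (FreeGroup.of 2)) = t₃ ∧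
        trM (ρ (FreeGroup.of 0 * FreeGroup.of 1)) = t₁₂ ∧
        trM (ρ (FreeGroup.of 1 * FreeGroup.of 2)) = t₂₃ ∧
        trM (ρ (FreeGroup.of 2 * FreeGroup.of 0)) = t₃₁ ∧
        trM (ρ (FreeGroup.of 0 * FreeGroup.of 1 * FreeGroup.of 2)) = t₁₂₃ := by
  refine ⟨FreeGroup.lift ![A, B, C], ?_, ?_, ?_, ?_, ?_, ?_, ?_⟩ <;>
    simp only [map_mul, FreeGroup.lift_apply_of, Matrix.cons_val_zero, Matrix.cons_val_one,
      Matrix.head_cons, Matrix.cons_val_two, Matrix.tail_cons]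
  exacts [h1, h2, h3, h4, h5, h6, h7]

theorem character_variety_of_free_group_on_three_generators
    {K : Type*} [Field K] (hK : QuadClosed K)
    (t₁ t₂ t₃ t₁₂ t₂₃ t₃₁ t₁₂₃ : K) :
    (∃ ρ : FreeGroup (Fin 3) →* SL2 K,
        trM (ρ (FreeGroup.of 0)) = t₁ ∧
        trM (ρ (FreeGroup.of 1)) = t₂ ∧
        trM (ρ (FreeGroup.of 2)) = t₃ ∧
        trM (ρ (FreeGroup.of 0 * FreeGroup.of 1)) = t₁₂ ∧
        trM (ρ (FreeGroup.of 1 * FreeGroup.of 2)) = t₂₃ ∧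
        trM (ρ (FreeGroup.of 2 * FreeGroup.of 0)) = t₃₁ ∧
        trM (ρ (FreeGroup.of 0 * FreeGroup.of 1 * FreeGroup.of 2)) = t₁₂₃) ↔
      t₁₂₃ ^ 2 + (t₁ * t₂ * t₃ - t₁ * t₂₃ - t₂ * t₃₁ - t₃ * t₁₂) * t₁₂₃ +
          t₁ ^ 2 + t₂ ^ 2 + t₃ ^ 2 + t₁₂ ^ 2 + t₂₃ ^ 2 + t₃₁ ^ 2 +
          t₁₂ * t₂₃ * t₃₁ - t₁ * t₂ * t₁₂ - t₂ * t₃ * t₂₃ - t₃ * t₁ * t₃₁ - 4 = 0 := by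
  constructor
  · rintro ⟨ρ, h1, h2, h3, h4, h5, h6, h7⟩
    have hd0 := Matrix.SpecialLinearGroup.det_coe (ρ (FreeGroup.of 0))
    have hd1 := Matrix.SpecialLinearGroup.det_coe (ρ (FreeGroup.of 1))
    have hd2 := Matrix.SpecialLinearGroup.det_coe (ρ (FreeGroup.of 2))
    rw [Matrix.det_fin_two] at hd0 hd1 hd2
    have key := fricke_matrix (ρ (FreeGroup.of 0) : Matrix (Fin 2) (Fin 2) K)
      (ρ (FreeGroup.of 1) : Matrix (Fin 2) (Fin 2) K)
      (ρ (FreeGroup.of 2) : Matrix (Fin 2) (Fin 2) K) hd0 hd1 hd2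
    rw [← h1, ← h2, ← h3, ← h4, ← h5, ← h6, ← h7]
    simp only [map_mul]
    simpa only [trM, Matrix.SpecialLinearGroup.coe_mul] using key
  · intro hrel
    obtain ⟨x, hx⟩ := hK (-t₁) 1
    have hx0 : x ≠ 0 := by
      intro h; rw [h] at hx; simp at hx
    have hxi : x * x⁻¹ = 1 := mul_inv_cancel₀ hx0
    have hx1 : x + x⁻¹ = t₁ := by
      field_simp
      linear_combination hx
    obtain ⟨y, hy⟩ := hK (-t₂) 1
    have hy0 : y ≠ 0 := by
      intro h; rw [h] at hy; simp at hy
    have hyi : y * y⁻¹ = 1 := mul_inv_cancel₀ hy0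
    have hy1 : y + y⁻¹ = t₂ := by
      field_simp
      linear_combination hy
    by_cases hΔ : t₁^2 + t₂^2 + t₁₂^2 - t₁*t₂*t₁₂ - 4 = 0
    · have hfac12 : (t₁₂ - (x*y + x⁻¹*y⁻¹)) * (t₁₂ - (x*y⁻¹ + x⁻¹*y)) = 0 := by
        linear_combination (y^2 + y⁻¹^2 + (-2)) * hxi + (x^2 + x⁻¹^2 + (-2)) * hyi + (t₁ + (-1)*t₂*t₁₂ + x + x⁻¹) * hx1 + (t₂ + (-1)*t₁₂*x + (-1)*t₁₂*x⁻¹ + y + y⁻¹) * hy1 + hΔ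
      rcases mul_eq_zero.1 hfac12 with h12 | h12
      · have hrel' : (-1)*x^2*y*y⁻¹ + x^2 + (-1)*x*x⁻¹*y^2 + (-1)*x*x⁻¹*y⁻¹^2 + 2*x*x⁻¹ + x*y*t₂₃*t₃₁ + x*y⁻¹*t₁₂₃*t₃ + (-1)*x*t₁₂₃*t₂₃ + (-1)*x*t₃*t₃₁ + (-1)*x⁻¹^2*y*y⁻¹ + x⁻¹^2 + x⁻¹*y*t₁₂₃*t₃ + x⁻¹*y⁻¹*t₂₃*t₃₁ + (-1)*x⁻¹*t₁₂₃*t₂₃ + (-1)*x⁻¹*t₃*t₃₁ + y^2 + 2*y*y⁻¹ + (-1)*y*t₁₂₃*t₃₁ + (-1)*y*t₃*t₂₃ + y⁻¹^2 + (-1)*y⁻¹*t₁₂₃*t₃₁ + (-1)*y⁻¹*t₃*t₂₃ + t₁₂₃^2 + t₃^2 + t₂₃^2 + t₃₁^2 + (-4) = 0 := by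
          linear_combination hrel + (t₁ + (-1)*t₂*t₁₂ + t₂*t₁₂₃*t₃ + x + x⁻¹ + (-1)*t₁₂₃*t₂₃ + (-1)*t₃*t₃₁) * hx1 + (t₂ + (-1)*t₁₂*x + (-1)*t₁₂*x⁻¹ + x*t₁₂₃*t₃ + x⁻¹*t₁₂₃*t₃ + y + y⁻¹ + (-1)*t₁₂₃*t₃₁ + (-1)*t₃*t₂₃) * hy1 + ((-1)*t₁₂ + x*y⁻¹ + x⁻¹*y + t₁₂₃*t₃ + (-1)*t₂₃*t₃₁) * h12
        obtain ⟨A, B, C, h1, h2, h3, h4, h5, h6, h7⟩ :=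
          deg_full x x⁻¹ y y⁻¹ t₁₂₃ t₃ t₂₃ t₃₁ hxi hyi hrel'
        exact glue A B C (by rw [h1, hx1]) (by rw [h2, hy1]) h3
          (by rw [h4]; linear_combination -h12) h5 h6 h7
      · have hyi' : y⁻¹ * y = 1 := by linear_combination hyi
        have hy1' : y⁻¹ + y = t₂ := by linear_combination hy1
        have hrel' : (-1)*x^2*y⁻¹*y + x^2 + (-1)*x*x⁻¹*y⁻¹^2 + (-1)*x*x⁻¹*y^2 + 2*x*x⁻¹ + x*y⁻¹*t₂₃*t₃₁ + x*y*t₁₂₃*t₃ + (-1)*x*t₁₂₃*t₂₃ + (-1)*x*t₃*t₃₁ + (-1)*x⁻¹^2*y⁻¹*y + x⁻¹^2 + x⁻¹*y⁻¹*t₁₂₃*t₃ + x⁻¹*y*t₂₃*t₃₁ + (-1)*x⁻¹*t₁₂₃*t₂₃ + (-1)*x⁻¹*t₃*t₃₁ + y⁻¹^2 + 2*y⁻¹*y + (-1)*y⁻¹*t₁₂₃*t₃₁ + (-1)*y⁻¹*t₃*t₂₃ + y^2 + (-1)*y*t₁₂₃*t₃₁ + (-1)*y*t₃*t₂₃ +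 t₁₂₃^2 + t₃^2 + t₂₃^2 + t₃₁^2 + (-4) = 0 := by
          linear_combination hrel + (t₁ + (-1)*t₂*t₁₂ + t₂*t₁₂₃*t₃ + x + x⁻¹ + (-1)*t₁₂₃*t₂₃ + (-1)*t₃*t₃₁) * hx1 + (t₂ + (-1)*t₁₂*x + (-1)*t₁₂*x⁻¹ + x*t₁₂₃*t₃ + x⁻¹*t₁₂₃*t₃ + y⁻¹ + y + (-1)*t₁₂₃*t₃₁ + (-1)*t₃*t₂₃) * hy1' + ((-1)*t₁₂ + x*y + x⁻¹*y⁻¹ + t₁₂₃*t₃ + (-1)*t₂₃*t₃₁) * h12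
        obtain ⟨A, B, C, h1, h2, h3, h4, h5, h6, h7⟩ :=
          deg_full x x⁻¹ y⁻¹ y t₁₂₃ t₃ t₂₃ t₃₁ hxi hyi' hrel'
        exact glue A B C (by rw [h1, hx1]) (by rw [h2, hy1']) h3
          (by rw [h4]; linear_combination -h12) h5 h6 h7
    · have hD : ((-1)*t₁₂^2 + t₁₂*x*y + t₁₂*x*y⁻¹ + t₁₂*x⁻¹*y + t₁₂*x⁻¹*y⁻¹ + (-1)*x^2*y*y⁻¹ + (-1)*x*x⁻¹*y^2 + (-1)*x*x⁻¹*y⁻¹^2 + (-1)*x⁻¹^2*y*y⁻¹) ≠ 0 := by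
        intro h
        apply hΔ
        linear_combination ((-1)*y^2 + (-1)*y⁻¹^2 + 2) * hxi + ((-1)*x^2 + (-1)*x⁻¹^2 + 2) * hyi + ((-1)*t₁ + t₂*t₁₂ + (-1)*x + (-1)*x⁻¹) * hx1 + ((-1)*t₂ + t₁₂*x + t₁₂*x⁻¹ + (-1)*y + (-1)*y⁻¹) * hy1 - h
      have hw : ((-1)*t₁₂^2 + t₁₂*x*y + t₁₂*x*y⁻¹ + t₁₂*x⁻¹*y + t₁₂*x⁻¹*y⁻¹ + (-1)*x^2*y*y⁻¹ + (-1)*x*x⁻¹*y^2 + (-1)*x*x⁻¹*y⁻¹^2 + (-1)*x⁻¹^2*y*y⁻¹) * ((-1)*t₁₂^2 + t₁₂*x*y + t₁₂*x*y⁻¹ + t₁₂*x⁻¹*y + t₁₂*x⁻¹*y⁻¹ + (-1)*x^2*y*y⁻¹ + (-1)*x*x⁻¹*y^2 + (-1)*x*x⁻¹*y⁻¹^2 + (-1)*x⁻¹^2*y*y⁻¹)⁻¹ = 1 := mul_inv_cancel₀ hD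
      have hrel' : t₁₂^2 + (-1)*t₁₂*x*y + (-1)*t₁₂*x*y⁻¹ + (-1)*t₁₂*x⁻¹*y + (-1)*t₁₂*x⁻¹*y⁻¹ + (-1)*t₁₂*t₁₂₃*t₃ + t₁₂*t₂₃*t₃₁ + x^2 + 2*x*x⁻¹ + x*y*t₁₂₃*t₃ + x*y⁻¹*t₁₂₃*t₃ + (-1)*x*t₁₂₃*t₂₃ + (-1)*x*t₃*t₃₁ + x⁻¹^2 + x⁻¹*y*t₁₂₃*t₃ + x⁻¹*y⁻¹*t₁₂₃*t₃ + (-1)*x⁻¹*t₁₂₃*t₂₃ + (-1)*x⁻¹*t₃*t₃₁ + y^2 + 2*y*y⁻¹ + (-1)*y*t₁₂₃*t₃₁ + (-1)*y*t₃*t₂₃ + y⁻¹^2 + (-1)*y⁻¹*t₁₂₃*t₃₁ + (-1)*y⁻¹*t₃*t₂₃ + t₁₂₃^2 + t₃^2 + t₂₃^2 + t₃₁^2 + (-4) = 0 := by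
        linear_combination hrel + (t₁ + (-1)*t₂*t₁₂ + t₂*t₁₂₃*t₃ + x + x⁻¹ + (-1)*t₁₂₃*t₂₃ + (-1)*t₃*t₃₁) * hx1 + (t₂ + (-1)*t₁₂*x + (-1)*t₁₂*x⁻¹ + x*t₁₂₃*t₃ + x⁻¹*t₁₂₃*t₃ + y + y⁻¹ + (-1)*t₁₂₃*t₃₁ + (-1)*t₃*t₂₃) * hy1
      obtain ⟨A, B, C, h1, h2, h3, h4, h5, h6, h7⟩ :=
        main_constr x x⁻¹ y y⁻¹ (((-1)*t₁₂^2 + t₁₂*x*y + t₁₂*x*y⁻¹ + t₁₂*x⁻¹*y + t₁₂*x⁻¹*y⁻¹ + (-1)*x^2*y*y⁻¹ + (-1)*x*x⁻¹*y^2 + (-1)*x*x⁻¹*y⁻¹^2 + (-1)*x⁻¹^2*y*y⁻¹))⁻¹ t₁₂₃ t₃ t₂₃ t₃₁ t₁₂ hxi hyi hw hrel'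
      exact glue A B C (by rw [h1, hx1]) (by rw [h2, hy1]) h3 h4 h5 h6 h7
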